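/- arXiv:1612.04267 — 2 statements merged into one kernel-verified Lean document; each statement's English description precedes it below -/
import Mathlib

section
/- Let X be a topological space, A ⊆ B a closed embedding with B and X normal spaces, and consider a pushout square with A → X any continuous map and Y = B ⊔_A X the pushout (adjunction space). Then Y is normal. -/
/-- The relation on `B ⊕ X` identifying `f a` with `g a`, whose quotient is the
adjunction space (pushout) `B ⊔_A X`. -/
def pushoutRel {A B X : Type*} (f : A → B) (g : A → X) : (B ⊕ X) → (B ⊕ X) → Prop :=
  fun p q => ∃ a : A, p = Sum.inl (f a) ∧ q = Sum.inr (g a)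

lemma continuousOn_union_of_isClosed {B Z : Type*} [TopologicalSpace B] [TopologicalSpace Z]
    {θ : B → Z} {s t : Set B} (hs : IsClosed s) (ht : IsClosed t)
    (h1 : ContinuousOn θ s) (h2 : ContinuousOn θ t) : ContinuousOn θ (s ∪ t) := by
  intro x _
  apply ContinuousWithinAt.union
  · by_cases h : x ∈ s
    · exact h1 x h
    · exact continuousWithinAt_of_notMem_closure (by rwa [hs.closure_eq])
  · by_cases h : x ∈ t
    · exact h2 x h
    · exact continuousWithinAt_of_notMem_closure (by rwa [ht.closure_eq])

/-- Let `f : A → B` be a closed embedding with `B` and `X` normal, and let `g : A → X` be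
any continuous map.  Then the pushout (adjunction space) `Y = B ⊔_A X`, i.e. the quotient
of `B ⊕ X` identifying `a ∈ A` with its image in `X`, is normal. -/
theorem pushout_normal
    {A B X : Type*} [TopologicalSpace A] [TopologicalSpace B] [TopologicalSpace X]
    [NormalSpace B] [NormalSpace X]
    (f : A → B) (hf : Topology.IsClosedEmbedding f) (g : A → X) (hg : Continuous g) :
    NormalSpace (Quot (pushoutRel f g)) := by
  classical
  constructor
  intro s t hs ht hst
  set cB : B → Quot (pushoutRel f g) := fun b => Quot.mk _ (Sum.inl b) with hcB
  set cX : X → Quot (pushoutRel f g) := fun x => Quot.mk _ (Sum.inr x) with hcX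
  have hcBc : Continuous cB := continuous_quot_mk.comp continuous_inl
  have hcXc : Continuous cX := continuous_quot_mk.comp continuous_inr
  have hkey : ∀ a : A, cB (f a) = cX (g a) := fun a => Quot.sound ⟨a, rfl, rfl⟩
  set sB := cB ⁻¹' s with hsB
  set tB := cB ⁻¹' t with htB
  set sX := cX ⁻¹' s with hsX
  set tX := cX ⁻¹' t with htX
  -- Urysohn on X
  obtain ⟨u, hu0, hu1, hu01⟩ :=
    exists_continuous_zero_one_of_isClosed (hs.preimage hcXc) (ht.preimage hcXc)
      (hst.preimage cX)
  -- Urysohn on B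
  obtain ⟨p, hp0, hp1, hp01⟩ :=
    exists_continuous_zero_one_of_isClosed (hs.preimage hcBc) (ht.preimage hcBc)
      (hst.preimage cB)
  -- Tietze extension of u ∘ g along f
  obtain ⟨w, hwf⟩ :=
    (ContinuousMap.mk (fun a => u (g a)) (u.continuous.comp hg)).exists_extension' hf
  have hwf' : ∀ a : A, w (f a) = u (g a) := fun a => congrFun hwf a
  -- the glued function on the closed set K
  set θ : B → ℝ := fun b => if b ∈ Set.range f then w b else p b with hθ
  set K : Set B := Set.range f ∪ (sB ∪ tB) with hK
  have hKc : IsClosed K :=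
    hf.isClosed_range.union ((hs.preimage hcBc).union (ht.preimage hcBc))
  -- values of w on sB/tB ∩ range f
  have hws : ∀ b ∈ Set.range f, b ∈ sB → w b = 0 := by
    rintro b ⟨a, rfl⟩ hb
    rw [hwf' a]
    have : g a ∈ sX := by
      simp only [hsX, Set.mem_preimage, ← hkey a]
      exact hb
    simpa using hu0 this
  have hwt : ∀ b ∈ Set.range f, b ∈ tB → w b = 1 := by
    rintro b ⟨a, rfl⟩ hb
    rw [hwf' a]
    have : g a ∈ tX := by
      simp only [htX, Set.mem_preimage, ← hkey a]
      exact hb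
    simpa using hu1 this
  have hθs : ∀ b ∈ sB, θ b = 0 := by
    intro b hb
    by_cases h : b ∈ Set.range f
    · simp only [hθ, if_pos h]; exact hws b h hb
    · simp only [hθ, if_neg h]; simpa using hp0 hb
  have hθt : ∀ b ∈ tB, θ b = 1 := by
    intro b hb
    by_cases h : b ∈ Set.range f
    · simp only [hθ, if_pos h]; exact hwt b h hb
    · simp only [hθ, if_neg h]; simpa using hp1 hb
  have hθK : ContinuousOn θ K := by
    apply continuousOn_union_of_isClosed hf.isClosed_range
      ((hs.preimage hcBc).union (ht.preimage hcBc))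
    · refine w.continuous.continuousOn.congr fun b hb => ?_
      show θ b = w b
      simp only [hθ]
      exact if_pos hb
    · refine p.continuous.continuousOn.congr fun b hb => ?_
      show θ b = p b
      rcases hb with hb | hb
      · rw [hθs b hb]; symm; simpa using hp0 hb
      · rw [hθt b hb]; symm; simpa using hp1 hb
  -- Tietze extension of θ from K to B
  obtain ⟨v, hv⟩ :=
    (ContinuousMap.mk (K.restrict θ) (continuousOn_iff_continuous_restrict.mp hθK)).exists_restrict_eq hKc
  have hvθ : ∀ b ∈ K, v b = θ b := fun b hb => ContinuousMap.congr_fun hv ⟨b, hb⟩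
  have hvf : ∀ a : A, v (f a) = u (g a) := by
    intro a
    have hmem : f a ∈ K := Or.inl ⟨a, rfl⟩
    rw [hvθ _ hmem]
    simp only [hθ, if_pos (Set.mem_range_self a)]
    exact hwf' a
  -- the separating function on Y
  set h : Quot (pushoutRel f g) → ℝ := Quot.lift (Sum.elim v u)
    (by rintro _ _ ⟨a, rfl, rfl⟩; simpa using hvf a) with hh
  have hhc : Continuous h :=
    continuous_quot_lift _ (v.continuous.sumElim u.continuous)
  have hhs : ∀ y ∈ s, h y = 0 := by
    intro y hy
    induction y using Quot.ind with
    | _ z =>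
      cases z with
      | inl b =>
        have hb : b ∈ sB := hy
        have : v b = 0 := by rw [hvθ b (Or.inr (Or.inl hb))]; exact hθs b hb
        simpa [hh] using this
      | inr x =>
        have hx : x ∈ sX := hy
        simpa [hh] using hu0 hx
  have hht : ∀ y ∈ t, h y = 1 := by
    intro y hy
    induction y using Quot.ind with
    | _ z =>
      cases z with
      | inl b =>
        have hb : b ∈ tB := hy
        have : v b = 1 := by rw [hvθ b (Or.inr (Or.inr hb))]; exact hθt b hb
        simpa [hh] using this
      | inr x =>
        have hx : x ∈ tX := hy
        simpa [hh] using hu1 hx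
  refine ⟨h ⁻¹' Set.Iio (1/2 : ℝ), h ⁻¹' Set.Ioi (1/2 : ℝ),
    (isOpen_Iio).preimage hhc, (isOpen_Ioi).preimage hhc, ?_, ?_, ?_⟩
  · intro y hy
    simp only [Set.mem_preimage, Set.mem_Iio, hhs y hy]
    norm_num
  · intro y hy
    simp only [Set.mem_preimage, Set.mem_Ioi, hht y hy]
    norm_num
  · rw [Set.disjoint_left]
    intro y h1 h2
    simp only [Set.mem_preimage, Set.mem_Iio] at h1
    simp only [Set.mem_preimage, Set.mem_Ioi] at h2
    exact absurd (h1.trans h2) (lt_irrefl _)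
end

section
/- Let G be a topological group acting continuously on a topological space X. Then the induced action of π₀(G) on π₀(X) is well-defined, and the map π₀(q) : π₀(X) → π₀(X/G) induced by the quotient map descends to a map π₀(X)/π₀(G) → π₀(X/G). If moreover the quotient map q : X → X/G is a Serre fibration, this descended map is a bijection. -/
/-- A map is a Serre fibration if it has the homotopy lifting property with respect to all
cubes (equivalently, all CW pairs / disks). -/
def IsSerreFibration {A B : Type*} [TopologicalSpace A] [TopologicalSpace B]
    (q : A → B) : Prop :=
  ∀ (n : ℕ) (F : C((Fin n → unitInterval) × unitInterval, B))
    (g : C((Fin n → unitInterval), A)),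
    (∀ y, q (g y) = F (y, 0)) →
    ∃ L : C((Fin n → unitInterval) × unitInterval, A),
      (∀ z, q (L z) = F z) ∧ ∀ y, L (y, 0) = g y

/-- The relation on `X` whose quotient is `π₀(X)/π₀(G)`. -/
def pi0OrbitRel (G : Type*) {X : Type*} [TopologicalSpace X] [Group G] [MulAction G X]
    (x y : X) : Prop :=
  ∃ g : G, Joined (g • x) y

private lemma joined_smul {G : Type*} [Group G] [TopologicalSpace G]
    {X : Type*} [TopologicalSpace X] [MulAction G X] [ContinuousSMul G X]
    {g g' : G} {x x' : X} (hg : Joined g g') (hx : Joined x x') :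
    Joined (g • x) (g' • x') := by
  obtain ⟨p⟩ := hg
  obtain ⟨r⟩ := hx
  exact ⟨⟨⟨fun t => p t • r t, by continuity⟩, by simp, by simp⟩⟩

private lemma joined_const_smul {G : Type*} [Group G] [TopologicalSpace G]
    {X : Type*} [TopologicalSpace X] [MulAction G X] [ContinuousSMul G X]
    (g : G) {x x' : X} (hx : Joined x x') : Joined (g • x) (g • x') := by
  obtain ⟨p⟩ := hx; exact ⟨p.map (continuous_const_smul g)⟩

/-- Let `G` be a topological group acting continuously on a topological space `X`.  Then
the induced `π₀(G)`-action on `π₀(X)` is well-defined, and the map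
`π₀(q) : π₀(X) → π₀(X/G)` induced by the quotient map descends to a map
`π₀(X)/π₀(G) → π₀(X/G)`.  If moreover `q : X → X/G` is a Serre fibration, this descended
map is a bijection. -/
theorem pi0_quotient_descends
    {G : Type*} [Group G] [TopologicalSpace G] [IsTopologicalGroup G]
    {X : Type*} [TopologicalSpace X] [MulAction G X] [ContinuousSMul G X] :
    (∃ a : ZerothHomotopy G → ZerothHomotopy X → ZerothHomotopy X,
      ∀ (g : G) (x : X), a (Quotient.mk (pathSetoid G) g) (Quotient.mk (pathSetoid X) x)
        = Quotient.mk (pathSetoid X) (g • x)) ∧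
    ∃ φ : Quot (pi0OrbitRel G (X := X)) →
        ZerothHomotopy (Quotient (MulAction.orbitRel G X)),
      (∀ x : X, φ (Quot.mk _ x) =
        Quotient.mk (pathSetoid (Quotient (MulAction.orbitRel G X)))
          (Quotient.mk (MulAction.orbitRel G X) x)) ∧
      (IsSerreFibration (Quotient.mk (MulAction.orbitRel G X)) → Function.Bijective φ) := by
  set q : X → Quotient (MulAction.orbitRel G X) := Quotient.mk (MulAction.orbitRel G X)
  have hq : Continuous q := continuous_quotient_mk'
  constructor
  · refine ⟨fun gc xc => Quotient.liftOn₂ gc xc (fun g x => Quotient.mk (pathSetoid X) (g • x))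
      (fun g x g' x' hg hx => Quotient.sound (joined_smul hg hx)), fun g x => rfl⟩
  · have key : ∀ x y : X, pi0OrbitRel G x y →
        Quotient.mk (pathSetoid (Quotient (MulAction.orbitRel G X))) (q x)
          = Quotient.mk (pathSetoid (Quotient (MulAction.orbitRel G X))) (q y) := by
      rintro x y ⟨g, hg⟩
      refine Quotient.sound ?_
      have h1 : q (g • x) = q x := Quotient.sound (MulAction.mem_orbit x g)
      obtain ⟨p⟩ := hg
      have : Joined (q (g • x)) (q y) := ⟨p.map hq⟩
      rwa [h1] at this
    refine ⟨Quot.lift (fun x => Quotient.mk _ (q x)) key, fun x => rfl, fun hfib => ?_⟩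
    constructor
    · -- injective
      intro u v
      induction u using Quot.ind with | _ x =>
      induction v using Quot.ind with | _ y =>
      intro h
      have hxy : Joined (q x) (q y) := Quotient.exact h
      obtain ⟨γ⟩ := hxy
      obtain ⟨L, hL1, hL2⟩ := hfib 0
        ⟨fun p => γ p.2, γ.continuous.comp continuous_snd⟩
        ⟨fun _ => x, continuous_const⟩
        (fun _ => by simp)
      set c : Fin 0 → unitInterval := fun i => i.elim0
      have hpath : Joined x (L (c, 1)) := by
        refine ⟨⟨⟨fun t => L (c, t), L.continuous.comp (continuous_const.prodMk continuous_id)⟩, ?_, rfl⟩⟩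
        simpa using hL2 c
      have hqL : q (L (c, 1)) = q y := by
        have := hL1 (c, 1)
        simpa [γ.target] using this
      obtain ⟨g, hg⟩ : L (c, 1) ∈ MulAction.orbit G y := Quotient.exact' hqL
      refine Quot.sound ⟨g⁻¹, ?_⟩
      have : Joined (g⁻¹ • x) (g⁻¹ • L (c, 1)) := joined_const_smul g⁻¹ hpath
      rwa [← hg, inv_smul_smul] at this
    · -- surjective
      intro z
      induction z using Quotient.ind with | _ w =>
      induction w using Quotient.ind with | _ x =>
      exact ⟨Quot.mk _ x, rfl⟩
end
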